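/- arXiv:2209.12057 — 3 statements merged into one kernel-verified Lean document; each statement's English description precedes it below -/
import Mathlib

section
/- With the dense initialization B̃₀ = ζ P_∥ P_∥ᵀ + ζᶜ P_⊥ P_⊥ᵀ satisfying B̃₀ S = ζ S, the MSS compact formulation B = B̃₀ + Ψ M Ψᵀ with Ψ = [S, Y − B̃₀S] and M = [[W(SᵀB̃₀S − (T+E+Tᵀ))W, W],[W, 0]] is equal to B = B̃₀ + Ψ̃ M̃ Ψ̃ᵀ with Ψ̃ = [S, Y] and M̃ = [[−ζW − W(T+E+Tᵀ)W, W],[W, 0]], where W = (SᵀS)⁻¹. -/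
open Matrix

/-- Equality of the two compact formulations of the MSS matrix under the dense
initialization `B̃₀` satisfying `B̃₀ S = ζ S`. -/
theorem second_compact_formulation {n l : ℕ}
    (S Y : Matrix (Fin n) (Fin l) ℝ) (B0 : Matrix (Fin n) (Fin n) ℝ) (ζ : ℝ)
    (hB0sym : B0ᵀ = B0) (hB0S : B0 * S = ζ • S)
    (hS : IsUnit (Sᵀ * S))
    (W : Matrix (Fin l) (Fin l) ℝ) (hW : W = (Sᵀ * S)⁻¹)
    (T E : Matrix (Fin l) (Fin l) ℝ)
    (hT : T = fun i j => if i < j then (Sᵀ * Y) i j else 0)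
    (hE : E = Matrix.diagonal (fun i => (Sᵀ * Y) i i))
    (Ψ : Matrix (Fin n) (Fin l ⊕ Fin l) ℝ)
    (hΨ : Ψ = Matrix.fromCols S (Y - B0 * S))
    (M : Matrix (Fin l ⊕ Fin l) (Fin l ⊕ Fin l) ℝ)
    (hM : M = Matrix.fromBlocks (W * (Sᵀ * B0 * S - (T + E + Tᵀ)) * W) W W 0)
    (Ψt : Matrix (Fin n) (Fin l ⊕ Fin l) ℝ)
    (hΨt : Ψt = Matrix.fromCols S Y)
    (Mt : Matrix (Fin l ⊕ Fin l) (Fin l ⊕ Fin l) ℝ)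
    (hMt : Mt = Matrix.fromBlocks (-(ζ • W) - W * (T + E + Tᵀ) * W) W W 0) :
    B0 + Ψ * M * Ψᵀ = B0 + Ψt * Mt * Ψtᵀ := by
  have hdet : IsUnit (Sᵀ * S).det := (Matrix.isUnit_iff_isUnit_det _).mp hS
  have hWS : W * (Sᵀ * S) = 1 := by rw [hW]; exact Matrix.nonsing_inv_mul _ hdet
  have hSW : (Sᵀ * S) * W = 1 := by rw [hW]; exact Matrix.mul_nonsing_inv _ hdet
  have hSBS : Sᵀ * B0 * S = ζ • (Sᵀ * S) := by
    rw [Matrix.mul_assoc, hB0S, Matrix.mul_smul]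
  set Θ := T + E + Tᵀ with hΘ
  have hM11 : W * (Sᵀ * B0 * S - Θ) * W = ζ • W - W * Θ * W := by
    rw [hSBS]
    simp [Matrix.mul_sub, Matrix.sub_mul, Matrix.mul_smul, Matrix.smul_mul,
      ← Matrix.mul_assoc, hWS]
  subst hΨ hM hΨt hMt
  congr 1
  rw [hB0S, hM11, Matrix.transpose_fromCols, Matrix.transpose_fromCols,
      Matrix.fromCols_mul_fromBlocks, Matrix.fromCols_mul_fromBlocks,
      Matrix.fromCols_mul_fromRows, Matrix.fromCols_mul_fromRows]
  simp only [Matrix.mul_zero, add_zero, zero_add, Matrix.zero_mul, Matrix.transpose_sub, Matrix.transpose_neg, Matrix.transpose_add, neg_smul, smul_neg,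
    Matrix.transpose_smul, Matrix.sub_mul, Matrix.mul_sub, Matrix.add_mul, Matrix.mul_add,
    Matrix.smul_mul, Matrix.mul_smul, sub_eq_add_neg, Matrix.neg_mul, smul_smul,
    Matrix.mul_neg, neg_neg, Matrix.mul_assoc]
  abel
end

section
/- (Moré–Sorensen optimality conditions, sufficiency) If s* ∈ ℝⁿ satisfies ‖s*‖₂ ≤ δ and there exists σ* ≥ 0 such that B + σ*I is positive semidefinite, (B + σ*I)s* = −g, and σ*(δ − ‖s*‖₂) = 0, then s* is a global minimizer of Q(s) = gᵀs + ½ sᵀBs over the ball ‖s‖₂ ≤ δ. -/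
open Matrix

noncomputable def norm2 {m : ℕ} (x : Fin m → ℝ) : ℝ := Real.sqrt (∑ i, x i ^ 2)

lemma norm2_sq {m : ℕ} (x : Fin m → ℝ) : norm2 x ^ 2 = x ⬝ᵥ x := by
  have h : (0:ℝ) ≤ ∑ i, x i ^ 2 := Finset.sum_nonneg fun i _ => sq_nonneg _
  rw [norm2, Real.sq_sqrt h]
  simp [dotProduct, sq]

lemma norm2_nonneg {m : ℕ} (x : Fin m → ℝ) : 0 ≤ norm2 x := Real.sqrt_nonneg _

/-- Moré–Sorensen optimality conditions: sufficiency. -/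
theorem more_sorensen_sufficiency {n : ℕ}
    (B : Matrix (Fin n) (Fin n) ℝ) (hB : Bᵀ = B)
    (g : Fin n → ℝ) (δ : ℝ) (hδ : 0 < δ)
    (Q : (Fin n → ℝ) → ℝ)
    (hQ : Q = fun s => g ⬝ᵥ s + (1 / 2) * (s ⬝ᵥ B.mulVec s))
    (sstar : Fin n → ℝ) (hfeas : norm2 sstar ≤ δ)
    (σ : ℝ) (hσ : 0 ≤ σ)
    (hpsd : (B + σ • (1 : Matrix (Fin n) (Fin n) ℝ)).PosSemidef)
    (heq : (B + σ • (1 : Matrix (Fin n) (Fin n) ℝ)).mulVec sstar = -g)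
    (hcomp : σ * (δ - norm2 sstar) = 0) :
    ∀ s : Fin n → ℝ, norm2 s ≤ δ → Q sstar ≤ Q s := by
  intro s hs
  set M := B + σ • (1 : Matrix (Fin n) (Fin n) ℝ) with hM
  have hMsym : Mᵀ = M := by
    simp [hM, Matrix.transpose_add, hB, Matrix.transpose_smul]
  have hMs : ∀ x : Fin n → ℝ, M.mulVec x = B.mulVec x + σ • x := by
    intro x
    simp [hM, Matrix.add_mulVec, Matrix.smul_mulVec]
  have hsym : ∀ x y : Fin n → ℝ, x ⬝ᵥ M.mulVec y = y ⬝ᵥ M.mulVec x := by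
    intro x y
    rw [Matrix.dotProduct_mulVec, ← Matrix.mulVec_transpose, hMsym,
      dotProduct_comm]
  have hnn : 0 ≤ (s - sstar) ⬝ᵥ M.mulVec (s - sstar) := by
    have := hpsd.dotProduct_mulVec_nonneg (s - sstar)
    simpa using this
  have hexp : (s - sstar) ⬝ᵥ M.mulVec (s - sstar)
      = s ⬝ᵥ M.mulVec s - 2 * (s ⬝ᵥ M.mulVec sstar) + sstar ⬝ᵥ M.mulVec sstar := by
    rw [Matrix.mulVec_sub, sub_dotProduct, dotProduct_sub,
      dotProduct_sub, hsym sstar s]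
    ring
  have hgs : g ⬝ᵥ s = -(s ⬝ᵥ M.mulVec sstar) := by
    have : M.mulVec sstar = -g := heq
    rw [← dotProduct_comm, this]
    simp [neg_dotProduct]
  have hgss : g ⬝ᵥ sstar = -(sstar ⬝ᵥ M.mulVec sstar) := by
    have : M.mulVec sstar = -g := heq
    rw [← dotProduct_comm, this]
    simp [neg_dotProduct]
  have hMss : s ⬝ᵥ M.mulVec s = s ⬝ᵥ B.mulVec s + σ * (s ⬝ᵥ s) := by
    rw [hMs]
    simp [dotProduct_add, dotProduct_smul, smul_eq_mul]
  have hMstst : sstar ⬝ᵥ M.mulVec sstar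
      = sstar ⬝ᵥ B.mulVec sstar + σ * (sstar ⬝ᵥ sstar) := by
    rw [hMs]
    simp [dotProduct_add, dotProduct_smul, smul_eq_mul]
  -- σ-term nonnegativity
  have hσterm : 0 ≤ σ * (sstar ⬝ᵥ sstar - s ⬝ᵥ s) := by
    rcases eq_or_lt_of_le hσ with h0 | hpos
    · simp [← h0]
    · have hns : norm2 sstar = δ := by
        have := mul_eq_zero.mp hcomp
        rcases this with h | h
        · exact absurd h (ne_of_gt hpos)
        · linarith
      have h1 : sstar ⬝ᵥ sstar = δ ^ 2 := by
        rw [← norm2_sq, hns]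
      have h2 : s ⬝ᵥ s ≤ δ ^ 2 := by
        rw [← norm2_sq]
        have := norm2_nonneg s
        nlinarith
      nlinarith
  subst hQ
  simp only
  rw [hgs, hgss]
  nlinarith [hnn, hexp, hMss, hMstst, hσterm]
end

section
/- (Moré–Sorensen optimality conditions, necessity) If s* is a global minimizer of Q(s) = gᵀs + ½ sᵀBs over {s : ‖s‖₂ ≤ δ}, then there exists σ* ≥ 0 such that B + σ*I is positive semidefinite, (B + σ*I)s* = −g, and σ*(δ − ‖s*‖₂) = 0. -/
open Matrix

lemma limit_lemma (A c ε₀ : ℝ) (hε₀ : 0 < ε₀)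
    (h : ∀ ε, 0 < ε → ε ≤ ε₀ → 0 ≤ A + ε * c) : 0 ≤ A := by
  by_contra hA
  push_neg at hA
  have hc : (0:ℝ) < |c| + 1 := by positivity
  set ε := min ε₀ (-A / (|c| + 1)) with hε
  have h1 : 0 < ε := lt_min hε₀ (div_pos (by linarith) hc)
  have h2 := h ε h1 (min_le_left _ _)
  have h4 : ε * (|c| + 1) ≤ -A := by
    rw [← le_div_iff₀ hc]; exact min_le_right _ _
  nlinarith [le_abs_self c, abs_nonneg c]

lemma limit_lemma4 (A c1 c2 c3 : ℝ)
    (h : ∀ ε, 0 < ε → ε ≤ 1 → 0 ≤ A + ε * c1 + ε^2 * c2 + ε^3 * c3) : 0 ≤ A := by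
  apply limit_lemma A (|c1| + |c2| + |c3|) 1 one_pos
  intro ε h1 h2
  have h3 := h ε h1 h2
  have p2 : ε^2 ≤ ε := by nlinarith
  have p3 : ε^3 ≤ ε := by nlinarith
  nlinarith [mul_le_mul_of_nonneg_left (le_abs_self c1) h1.le,
    mul_le_mul_of_nonneg_left (le_abs_self c2) (pow_pos h1 2).le,
    mul_le_mul_of_nonneg_left (le_abs_self c3) (pow_pos h1 3).le,
    mul_nonneg (sub_nonneg.mpr p2) (abs_nonneg c2),
    mul_nonneg (sub_nonneg.mpr p3) (abs_nonneg c3)]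

/-- Moré–Sorensen optimality conditions: necessity. -/
theorem more_sorensen_necessity {n : ℕ}
    (B : Matrix (Fin n) (Fin n) ℝ) (hB : Bᵀ = B)
    (g : Fin n → ℝ) (δ : ℝ) (hδ : 0 < δ)
    (Q : (Fin n → ℝ) → ℝ)
    (hQ : Q = fun s => g ⬝ᵥ s + (1 / 2) * (s ⬝ᵥ B.mulVec s))
    (sstar : Fin n → ℝ) (hfeas : norm2 sstar ≤ δ)
    (hmin : ∀ s : Fin n → ℝ, norm2 s ≤ δ → Q sstar ≤ Q s) :
    ∃ σ : ℝ, 0 ≤ σ ∧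
      (B + σ • (1 : Matrix (Fin n) (Fin n) ℝ)).PosSemidef ∧
      (B + σ • (1 : Matrix (Fin n) (Fin n) ℝ)).mulVec sstar = -g ∧
      σ * (δ - norm2 sstar) = 0 := by
  have hdd : ∀ x : Fin n → ℝ, 0 ≤ x ⬝ᵥ x := by
    intro x
    exact Finset.sum_nonneg fun i _ => mul_self_nonneg (x i)
  have hsym : ∀ x y : Fin n → ℝ, x ⬝ᵥ B.mulVec y = y ⬝ᵥ B.mulVec x := by
    intro x y
    rw [dotProduct_mulVec, ← mulVec_transpose, hB, dotProduct_comm]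
  have hsq : ∀ x : Fin n → ℝ, (norm2 x)^2 = x ⬝ᵥ x := by
    intro x
    rw [norm2, Real.sq_sqrt (by positivity)]
    simp [dotProduct, sq]
  have feas_iff : ∀ x : Fin n → ℝ, norm2 x ≤ δ ↔ x ⬝ᵥ x ≤ δ^2 := by
    intro x
    have h0 : (0:ℝ) ≤ norm2 x := Real.sqrt_nonneg _
    constructor
    · intro h
      rw [← hsq x]
      exact pow_le_pow_left₀ h0 h 2
    · intro h
      have hd : x ⬝ᵥ x = ∑ i, x i ^ 2 := by simp [dotProduct, sq]
      have h2 : ∑ i, x i ^ 2 ≤ δ^2 := by rw [← hd]; exact h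
      calc norm2 x = Real.sqrt (∑ i, x i ^ 2) := rfl
        _ ≤ Real.sqrt (δ^2) := Real.sqrt_le_sqrt h2
        _ = δ := Real.sqrt_sq hδ.le
  set v : Fin n → ℝ := g + B.mulVec sstar with hv
  have key : ∀ u : Fin n → ℝ, (sstar + u) ⬝ᵥ (sstar + u) ≤ δ^2 →
      0 ≤ v ⬝ᵥ u + (1/2) * (u ⬝ᵥ B.mulVec u) := by
    intro u hu
    have h := hmin _ ((feas_iff _).mpr hu)
    rw [hQ] at h
    simp only at h
    have expand : g ⬝ᵥ (sstar + u) + (1/2) * ((sstar + u) ⬝ᵥ B.mulVec (sstar + u))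
        = (g ⬝ᵥ sstar + (1/2) * (sstar ⬝ᵥ B.mulVec sstar))
          + (v ⬝ᵥ u + (1/2) * (u ⬝ᵥ B.mulVec u)) := by
      rw [hv]
      simp only [mulVec_add, dotProduct_add, add_dotProduct]
      rw [show B *ᵥ sstar ⬝ᵥ u = sstar ⬝ᵥ B *ᵥ u from (dotProduct_comm _ _).trans (hsym u sstar),
        hsym u sstar]
      ring
    rw [expand] at h
    linarith
  have keyT : ∀ (t : ℝ) (u : Fin n → ℝ),
      sstar ⬝ᵥ sstar + 2*t*(sstar ⬝ᵥ u) + t^2 * (u ⬝ᵥ u) ≤ δ^2 →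
      0 ≤ t * (v ⬝ᵥ u) + t^2/2 * (u ⬝ᵥ B.mulVec u) := by
    intro t u hu
    have hfe : (sstar + t • u) ⬝ᵥ (sstar + t • u) ≤ δ^2 := by
      have e : (sstar + t • u) ⬝ᵥ (sstar + t • u)
          = sstar ⬝ᵥ sstar + 2*t*(sstar ⬝ᵥ u) + t^2 * (u ⬝ᵥ u) := by
        simp only [dotProduct_add, add_dotProduct, dotProduct_smul, smul_dotProduct,
          smul_eq_mul, dotProduct_comm u sstar]
        ring
      rw [e]; exact hu
    have h := key _ hfe
    have e1 : v ⬝ᵥ (t • u) = t * (v ⬝ᵥ u) := by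
      simp [dotProduct_smul, smul_eq_mul]
    have e2 : (t • u) ⬝ᵥ B.mulVec (t • u) = t^2 * (u ⬝ᵥ B.mulVec u) := by
      rw [mulVec_smul]
      simp only [dotProduct_smul, smul_dotProduct, smul_eq_mul]
      ring
    rw [e1, e2] at h
    linarith
  rcases lt_or_eq_of_le hfeas with hlt | heq
  · -- interior case: σ = 0
    have hns : sstar ⬝ᵥ sstar < δ^2 := by
      rw [← hsq sstar]
      exact pow_lt_pow_left₀ hlt (Real.sqrt_nonneg _) (by norm_num)
    have hr : 0 < δ^2 - sstar ⬝ᵥ sstar := by linarith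
    -- for each u, a window of feasible small t > 0
    have window : ∀ u : Fin n → ℝ, ∃ ε₀ : ℝ, 0 < ε₀ ∧ ∀ t, 0 < t → t ≤ ε₀ →
        sstar ⬝ᵥ sstar + 2*t*(sstar ⬝ᵥ u) + t^2 * (u ⬝ᵥ u) ≤ δ^2 := by
      intro u
      have hc : (0:ℝ) < 2*|sstar ⬝ᵥ u| + (u ⬝ᵥ u) + 1 := by
        have := hdd u; positivity
      refine ⟨min 1 ((δ^2 - sstar ⬝ᵥ sstar)/(2*|sstar ⬝ᵥ u| + (u ⬝ᵥ u) + 1)),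
        lt_min one_pos (div_pos hr hc), ?_⟩
      intro t ht1 ht2
      have h1 : t ≤ 1 := le_trans ht2 (min_le_left _ _)
      have h3 : t * (2*|sstar ⬝ᵥ u| + (u ⬝ᵥ u) + 1) ≤ δ^2 - sstar ⬝ᵥ sstar := by
        rw [← le_div_iff₀ hc]
        exact le_trans ht2 (min_le_right _ _)
      have p1 : 2*t*(sstar ⬝ᵥ u) ≤ 2*t*|sstar ⬝ᵥ u| :=
        mul_le_mul_of_nonneg_left (le_abs_self _) (by linarith)
      have p2 : t^2 * (u ⬝ᵥ u) ≤ t * (u ⬝ᵥ u) := by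
        have : t^2 ≤ t := by nlinarith
        exact mul_le_mul_of_nonneg_right this (hdd u)
      nlinarith
    have hvu : ∀ u : Fin n → ℝ, 0 ≤ v ⬝ᵥ u := by
      intro u
      obtain ⟨ε₀, hε₀, hwin⟩ := window u
      apply limit_lemma (v ⬝ᵥ u) ((u ⬝ᵥ B.mulVec u)/2) ε₀ hε₀
      intro t ht1 ht2
      have h := keyT t u (hwin t ht1 ht2)
      have e : t * ((v ⬝ᵥ u) + t * ((u ⬝ᵥ B.mulVec u)/2))
          = t * (v ⬝ᵥ u) + t^2/2 * (u ⬝ᵥ B.mulVec u) := by ring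
      have h2 : t * 0 ≤ t * ((v ⬝ᵥ u) + t * ((u ⬝ᵥ B.mulVec u)/2)) := by
        rw [mul_zero, e]; exact h
      exact le_of_mul_le_mul_left h2 ht1
    have hv0 : v = 0 := by
      rw [← dotProduct_self_eq_zero (v := v)]
      have h1 := hvu v
      have h2 := hvu (-v)
      rw [dotProduct_neg] at h2
      linarith
    have hquad : ∀ x : Fin n → ℝ, 0 ≤ x ⬝ᵥ B.mulVec x := by
      intro x
      obtain ⟨ε₀, hε₀, hwin⟩ := window x
      have h := keyT ε₀ x (hwin ε₀ hε₀ le_rfl)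
      rw [hv0, zero_dotProduct] at h
      rw [mul_zero, zero_add] at h
      nlinarith [pow_pos hε₀ 2]
    refine ⟨0, le_rfl, ?_, ?_, ?_⟩
    · rw [zero_smul, add_zero]
      refine posSemidef_iff_dotProduct_mulVec.mpr ⟨?_, ?_⟩
      · rw [Matrix.IsHermitian, conjTranspose_eq_transpose_of_trivial, hB]
      · intro x
        rw [star_trivial]
        exact hquad x
    · rw [zero_smul, add_zero]
      have : g + B.mulVec sstar = 0 := by rw [← hv, hv0]
      funext i
      have := congrFun this i
      simp only [Pi.add_apply, Pi.zero_apply] at this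
      simp only [Pi.neg_apply]
      linarith
    · ring
  · -- boundary case
    have hb : sstar ⬝ᵥ sstar = δ^2 := by
      rw [← hsq sstar, heq]
    set σ : ℝ := -(v ⬝ᵥ sstar)/δ^2 with hσdef
    have hδ2 : (0:ℝ) < δ^2 := by positivity
    have hvs : v ⬝ᵥ sstar = -σ * δ^2 := by
      rw [hσdef]; field_simp
    -- chord inequality
    have chord : ∀ u : Fin n → ℝ, u ⬝ᵥ u ≠ 0 →
        0 ≤ -(sstar ⬝ᵥ u) * (v ⬝ᵥ u) * (u ⬝ᵥ u) + (sstar ⬝ᵥ u)^2 * (u ⬝ᵥ B.mulVec u) := by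
      intro u hN
      set N := u ⬝ᵥ u with hNdef
      set α := sstar ⬝ᵥ u with hαdef
      set t₀ := -2*α/N with ht₀
      have hfe : sstar ⬝ᵥ sstar + 2*t₀*α + t₀^2 * N ≤ δ^2 := by
        have : 2*t₀*α + t₀^2 * N = 0 := by
          rw [ht₀]; field_simp; ring
        rw [hb]; linarith
      have h := keyT t₀ u hfe
      have hNpos : 0 < N := lt_of_le_of_ne (hdd u) (Ne.symm hN)
      have e : t₀ * (v ⬝ᵥ u) + t₀^2/2 * (u ⬝ᵥ B.mulVec u)
          = (2/N^2) * (-(α) * (v ⬝ᵥ u) * N + α^2 * (u ⬝ᵥ B.mulVec u)) := by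
        rw [ht₀]; field_simp
      rw [e] at h
      have hpos : (0:ℝ) < 2/N^2 := by positivity
      nlinarith
    -- step 1 : w := v + σ • sstar is zero
    have hw : v + σ • sstar = 0 := by
      set w : Fin n → ℝ := v + σ • sstar with hwdef
      have hws : w ⬝ᵥ sstar = 0 := by
        rw [hwdef, add_dotProduct, smul_dotProduct, smul_eq_mul, hb, hvs]; ring
      have hsw : sstar ⬝ᵥ w = 0 := by rw [dotProduct_comm]; exact hws
      have hvw : v ⬝ᵥ w = w ⬝ᵥ w := by
        have : v = w - σ • sstar := by rw [hwdef]; abel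
        rw [this, sub_dotProduct, smul_dotProduct, smul_eq_mul, hsw]; ring
      set W := w ⬝ᵥ w with hWdef
      have hWnn : 0 ≤ W := hdd w
      have hW2 : 0 ≤ -(δ^2 * W^2) := by
        apply limit_lemma4 (-(δ^2 * W^2))
          (σ * δ^4 * W + δ^4 * (w ⬝ᵥ B.mulVec w))
          (-(W * δ^4) + 2 * δ^4 * (sstar ⬝ᵥ B.mulVec w))
          (σ * δ^6 + δ^4 * (sstar ⬝ᵥ B.mulVec sstar))
        intro ε hε1 hε2
        set u : Fin n → ℝ := w + ε • sstar with hudef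
        have hαu : sstar ⬝ᵥ u = ε * δ^2 := by
          rw [hudef, dotProduct_add, dotProduct_smul, smul_eq_mul, hsw, hb]; ring
        have hNu : u ⬝ᵥ u = W + ε^2 * δ^2 := by
          rw [hudef]
          simp only [dotProduct_add, add_dotProduct, dotProduct_smul, smul_dotProduct,
            smul_eq_mul, hsw, hws, hb, ← hWdef]
          ring
        have hNne : u ⬝ᵥ u ≠ 0 := by
          rw [hNu]
          have : 0 < ε^2 * δ^2 := by positivity
          linarith
        have hvu : v ⬝ᵥ u = W - ε * σ * δ^2 := by
          rw [hudef, dotProduct_add, dotProduct_smul, smul_eq_mul, hvw, hvs]; ring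
        have hq : u ⬝ᵥ B.mulVec u = (w ⬝ᵥ B.mulVec w) + 2*ε*(sstar ⬝ᵥ B.mulVec w)
            + ε^2 * (sstar ⬝ᵥ B.mulVec sstar) := by
          rw [hudef]
          simp only [mulVec_add, mulVec_smul, dotProduct_add, add_dotProduct,
            dotProduct_smul, smul_dotProduct, smul_eq_mul]
          rw [hsym w sstar]
          ring
        have h := chord u hNne
        rw [hαu, hNu, hvu, hq] at h
        have e : -(ε * δ^2) * (W - ε * σ * δ^2) * (W + ε^2 * δ^2)
            + (ε * δ^2)^2 * ((w ⬝ᵥ B.mulVec w) + 2*ε*(sstar ⬝ᵥ B.mulVec w)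
              + ε^2 * (sstar ⬝ᵥ B.mulVec sstar))
            = ε * (-(δ^2 * W^2) + ε * (σ * δ^4 * W + δ^4 * (w ⬝ᵥ B.mulVec w))
              + ε^2 * (-(W * δ^4) + 2 * δ^4 * (sstar ⬝ᵥ B.mulVec w))
              + ε^3 * (σ * δ^6 + δ^4 * (sstar ⬝ᵥ B.mulVec sstar))) := by ring
        rw [e] at h
        have h2 : ε * 0 ≤ ε * (-(δ^2 * W^2) + ε * (σ * δ^4 * W + δ^4 * (w ⬝ᵥ B.mulVec w))
              + ε^2 * (-(W * δ^4) + 2 * δ^4 * (sstar ⬝ᵥ B.mulVec w))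
              + ε^3 * (σ * δ^6 + δ^4 * (sstar ⬝ᵥ B.mulVec sstar))) := by
          rw [mul_zero]; exact h
        have h3 := le_of_mul_le_mul_left h2 hε1
        linarith
      have h1 : W^2 ≤ 0 := by nlinarith [hδ2, hW2]
      have h2 : W^2 = 0 := le_antisymm h1 (sq_nonneg W)
      have h3 : W = 0 := sq_eq_zero_iff.mp h2
      rw [hWdef] at h3
      exact dotProduct_self_eq_zero.mp h3
    have hveq : ∀ y : Fin n → ℝ, v ⬝ᵥ y = -σ * (sstar ⬝ᵥ y) := by
      intro y
      have h1 : v = -(σ • sstar) := eq_neg_of_add_eq_zero_left hw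
      rw [h1, neg_dotProduct, smul_dotProduct, smul_eq_mul]
      ring
    -- σ ≥ 0
    have hσnn : 0 ≤ σ := by
      have hlim : ∀ t, 0 < t → t ≤ 1 →
          0 ≤ σ * δ^2 + t * ((sstar ⬝ᵥ B.mulVec sstar)/2) := by
        intro t ht1 ht2
        have hfe : sstar ⬝ᵥ sstar + 2*(-t)*(sstar ⬝ᵥ sstar) + (-t)^2 * (sstar ⬝ᵥ sstar) ≤ δ^2 := by
          rw [hb]
          nlinarith [mul_nonneg (mul_nonneg ht1.le hδ2.le) (by linarith : (0:ℝ) ≤ 2 - t)]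
        have h := keyT (-t) sstar hfe
        rw [hvs] at h
        have h2 : t * 0 ≤ t * (σ * δ^2 + t * ((sstar ⬝ᵥ B.mulVec sstar)/2)) := by
          rw [mul_zero]
          calc (0:ℝ) ≤ (-t) * (-σ * δ^2) + (-t)^2/2 * (sstar ⬝ᵥ B.mulVec sstar) := h
            _ = t * (σ * δ^2 + t * ((sstar ⬝ᵥ B.mulVec sstar)/2)) := by ring
        exact le_of_mul_le_mul_left h2 ht1
      have h := limit_lemma (σ * δ^2) ((sstar ⬝ᵥ B.mulVec sstar)/2) 1 one_pos hlim
      nlinarith [hδ2]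
    refine ⟨σ, hσnn, posSemidef_iff_dotProduct_mulVec.mpr ⟨?_, ?_⟩, ?_, ?_⟩
    · -- Hermitian
      rw [Matrix.IsHermitian, conjTranspose_eq_transpose_of_trivial, transpose_add,
        transpose_smul, transpose_one, hB]
    · -- quadratic form nonneg
      intro x
      rw [star_trivial]
      have hMx : (B + σ • (1 : Matrix (Fin n) (Fin n) ℝ)).mulVec x = B.mulVec x + σ • x := by
        rw [add_mulVec, smul_mulVec, one_mulVec]
      rw [hMx, dotProduct_add, dotProduct_smul, smul_eq_mul]
      by_cases hx : sstar ⬝ᵥ x = 0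
      · -- perpendicular direction: limit argument
        have hgoal : 0 ≤ (x ⬝ᵥ B.mulVec x + σ * (x ⬝ᵥ x)) := by
          apply limit_lemma4 (x ⬝ᵥ B.mulVec x + σ * (x ⬝ᵥ x))
            (2 * (sstar ⬝ᵥ B.mulVec x))
            (σ * δ^2 + sstar ⬝ᵥ B.mulVec sstar) 0
          intro ε hε1 hε2
          set u : Fin n → ℝ := x + ε • sstar with hudef
          have hαu : sstar ⬝ᵥ u = ε * δ^2 := by
            rw [hudef, dotProduct_add, dotProduct_smul, smul_eq_mul, hx, hb]; ring
          have hxs : x ⬝ᵥ sstar = 0 := by rw [dotProduct_comm]; exact hx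
          have hNu : u ⬝ᵥ u = x ⬝ᵥ x + ε^2 * δ^2 := by
            rw [hudef]
            simp only [dotProduct_add, add_dotProduct, dotProduct_smul, smul_dotProduct,
              smul_eq_mul, hx, hxs, hb]
            ring
          have hNne : u ⬝ᵥ u ≠ 0 := by
            rw [hNu]
            have h1 : 0 < ε^2 * δ^2 := by positivity
            have h2 := hdd x
            linarith
          have hvu : v ⬝ᵥ u = -σ * (ε * δ^2) := by rw [hveq u, hαu]
          have hq : u ⬝ᵥ B.mulVec u = (x ⬝ᵥ B.mulVec x) + 2*ε*(sstar ⬝ᵥ B.mulVec x)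
              + ε^2 * (sstar ⬝ᵥ B.mulVec sstar) := by
            rw [hudef]
            simp only [mulVec_add, mulVec_smul, dotProduct_add, add_dotProduct,
              dotProduct_smul, smul_dotProduct, smul_eq_mul]
            rw [hsym x sstar]
            ring
          have h := chord u hNne
          rw [hαu, hNu, hvu, hq] at h
          have e : -(ε * δ^2) * (-σ * (ε * δ^2)) * (x ⬝ᵥ x + ε^2 * δ^2)
              + (ε * δ^2)^2 * ((x ⬝ᵥ B.mulVec x) + 2*ε*(sstar ⬝ᵥ B.mulVec x)
                + ε^2 * (sstar ⬝ᵥ B.mulVec sstar))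
              = (ε^2 * δ^4) * ((x ⬝ᵥ B.mulVec x + σ * (x ⬝ᵥ x))
                + ε * (2 * (sstar ⬝ᵥ B.mulVec x))
                + ε^2 * (σ * δ^2 + sstar ⬝ᵥ B.mulVec sstar) + ε^3 * 0) := by ring
          rw [e] at h
          have hpos : (0:ℝ) < ε^2 * δ^4 := by positivity
          have h2 : (ε^2 * δ^4) * 0 ≤ (ε^2 * δ^4) * ((x ⬝ᵥ B.mulVec x + σ * (x ⬝ᵥ x))
                + ε * (2 * (sstar ⬝ᵥ B.mulVec x))
                + ε^2 * (σ * δ^2 + sstar ⬝ᵥ B.mulVec sstar) + ε^3 * 0) := by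
            rw [mul_zero]; exact h
          exact le_of_mul_le_mul_left h2 hpos
        linarith [hgoal]
      · -- non-perpendicular direction: chord directly
        have hNx : x ⬝ᵥ x ≠ 0 := by
          intro h0
          exact hx (by rw [dotProduct_self_eq_zero.mp h0, dotProduct_zero])
        have h := chord x hNx
        have hvx : v ⬝ᵥ x = -σ * (sstar ⬝ᵥ x) := hveq x
        rw [hvx] at h
        have e : -(sstar ⬝ᵥ x) * (-σ * (sstar ⬝ᵥ x)) * (x ⬝ᵥ x)
            + (sstar ⬝ᵥ x)^2 * (x ⬝ᵥ B.mulVec x)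
            = (sstar ⬝ᵥ x)^2 * (x ⬝ᵥ B.mulVec x + σ * (x ⬝ᵥ x)) := by ring
        rw [e] at h
        have hpos : (0:ℝ) < (sstar ⬝ᵥ x)^2 := by positivity
        have h2 : (sstar ⬝ᵥ x)^2 * 0 ≤ (sstar ⬝ᵥ x)^2 * (x ⬝ᵥ B.mulVec x + σ * (x ⬝ᵥ x)) := by
          rw [mul_zero]; exact h
        exact le_of_mul_le_mul_left h2 hpos
    · -- mulVec equation
      rw [add_mulVec, smul_mulVec, one_mulVec]
      have h3 := hw
      rw [hv] at h3
      funext i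
      have h4 := congrFun h3 i
      simp only [Pi.add_apply, Pi.smul_apply, Pi.zero_apply, smul_eq_mul] at h4
      simp only [Pi.add_apply, Pi.smul_apply, Pi.neg_apply, smul_eq_mul]
      linarith
    · -- complementarity
      rw [heq]
      ring
end
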